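/- Let S be a set and let 𝒯 be a transfer system on S. Then 𝒯 is a pre-transfer system on S; explicitly: (i) ∅ ∈ 𝒯; (ii) if T₁, T₂ ∈ 𝒯 and T₁ ∩ T₂ ∈ 𝒯, then T₁ ∪ T₂ ∈ 𝒯 (in particular, if T₁ ∩ T₂ = ∅ and T₁, T₂ ∈ 𝒯 then T₁ ∪ T₂ ∈ 𝒯); and (iii) if T₁ and T₂ are disjoint subsets of S with T₁ ∈ 𝒯 and T₁ ∪ T₂ ∈ 𝒯, and for every proper subset U of T₁ either U ∈ 𝒯 or T₁ ∖ U ∈ 𝒯, then T₂ ∈ 𝒯. -/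
import Mathlib


/-- A collection `𝒯` of subsets of `S` is a *transfer system* on `S` if there exists an
equivalence relation `∼` on the subsets of `S` such that for every `T ⊆ S`:
`T ∈ 𝒯` if and only if for every `U ⊆ S ∖ T` one has `U ∼ U ∪ T`. -/
def IsTransferSystem {S : Type*} (𝒯 : Set (Set S)) : Prop :=
  ∃ r : Set S → Set S → Prop, Equivalence r ∧
    ∀ T : Set S, T ∈ 𝒯 ↔ ∀ U : Set S, U ⊆ Tᶜ → r U (U ∪ T)

/-- A collection `𝒯` of subsets of `S` is a *pre-transfer system* on `S` if:
(i) `∅ ∈ 𝒯`; (ii) whenever `T₁, T₂ ∈ 𝒯` and `T₁ ∩ T₂ ∈ 𝒯`, then `T₁ ∪ T₂ ∈ 𝒯`;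
(iii) whenever `T₁, T₂ ⊆ S` are disjoint, `T₁ ∈ 𝒯`, `T₁ ∪ T₂ ∈ 𝒯`, and for every
proper subset `U` of `T₁` either `U ∈ 𝒯` or `T₁ \ U ∈ 𝒯`, then `T₂ ∈ 𝒯`. -/
def IsPreTransferSystem {S : Type*} (𝒯 : Set (Set S)) : Prop :=
  ∅ ∈ 𝒯 ∧
  (∀ T₁ T₂ : Set S, T₁ ∈ 𝒯 → T₂ ∈ 𝒯 → T₁ ∩ T₂ ∈ 𝒯 → T₁ ∪ T₂ ∈ 𝒯) ∧
  (∀ T₁ T₂ : Set S, Disjoint T₁ T₂ → T₁ ∈ 𝒯 → T₁ ∪ T₂ ∈ 𝒯 →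
    (∀ U : Set S, U ⊂ T₁ → U ∈ 𝒯 ∨ T₁ \ U ∈ 𝒯) → T₂ ∈ 𝒯)

/-- Every transfer system on `S` is a pre-transfer system on `S`; in particular
(as a special case of condition (ii) together with (i)), if `T₁, T₂ ∈ 𝒯` are
disjoint then `T₁ ∪ T₂ ∈ 𝒯`. -/
theorem isPreTransferSystem_of_isTransferSystem {S : Type*} (𝒯 : Set (Set S))
    (h : IsTransferSystem 𝒯) :
    IsPreTransferSystem 𝒯 ∧
    (∀ T₁ T₂ : Set S, T₁ ∩ T₂ = ∅ → T₁ ∈ 𝒯 → T₂ ∈ 𝒯 → T₁ ∪ T₂ ∈ 𝒯) := by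

  obtain ⟨r, hr, hchar⟩ := h
  have hempty : ∅ ∈ 𝒯 := by
    rw [hchar]
    intro U _
    simpa using hr.refl U
  have hunion : ∀ T₁ T₂ : Set S, T₁ ∈ 𝒯 → T₂ ∈ 𝒯 → T₁ ∩ T₂ ∈ 𝒯 → T₁ ∪ T₂ ∈ 𝒯 := by
    intro T₁ T₂ h1 h2 h12
    rw [hchar] at h1 h2 h12 ⊢
    intro U hU
    have hU1 : U ⊆ T₁ᶜ := fun x hx => fun hx1 => hU hx (Or.inl hx1)
    have hU2 : U ⊆ T₂ᶜ := fun x hx => fun hx2 => hU hx (Or.inr hx2)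
    have step1 : r U (U ∪ T₁) := h1 U hU1
    have hW : U ∪ (T₁ \ T₂) ⊆ T₂ᶜ := by
      intro x hx hx2
      rcases hx with hx | hx
      · exact hU2 hx hx2
      · exact hx.2 hx2
    have step2 : r (U ∪ (T₁ \ T₂)) ((U ∪ (T₁ \ T₂)) ∪ T₂) := h2 _ hW
    have hW' : U ∪ (T₁ \ T₂) ⊆ (T₁ ∩ T₂)ᶜ := by
      intro x hx hx12
      rcases hx with hx | hx
      · exact hU1 hx hx12.1
      · exact hx.2 hx12.2
    have step3 : r (U ∪ (T₁ \ T₂)) ((U ∪ (T₁ \ T₂)) ∪ (T₁ ∩ T₂)) := h12 _ hW'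
    have e1 : (U ∪ (T₁ \ T₂)) ∪ (T₁ ∩ T₂) = U ∪ T₁ := by
      ext x; simp only [Set.mem_union, Set.mem_diff, Set.mem_inter_iff]; tauto
    have e2 : (U ∪ (T₁ \ T₂)) ∪ T₂ = U ∪ (T₁ ∪ T₂) := by
      ext x; simp only [Set.mem_union, Set.mem_diff]; tauto
    rw [e1] at step3
    rw [e2] at step2
    exact hr.trans (hr.trans step1 (hr.symm step3)) step2
  have hcase : ∀ T₁ T₂ U : Set S, Disjoint T₁ T₂ → T₁ ∈ 𝒯 → T₁ ∪ T₂ ∈ 𝒯 →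
      U ⊆ T₂ᶜ → (U ∩ T₁ ∈ 𝒯 ∨ T₁ \ U ∈ 𝒯) → r U (U ∪ T₂) := by
    intro T₁ T₂ U hdisj h1 h12 hU hcases
    have hdisj' : ∀ x, x ∈ T₁ → x ∉ T₂ := fun x hx hx2 =>
      Set.disjoint_left.mp hdisj hx hx2
    rcases hcases with hW | hD
    · -- W = U ∩ T₁ ∈ 𝒯; V = U \ T₁
      rw [hchar] at hW h1
      set V := U \ T₁ with hV
      have hVW : V ⊆ (U ∩ T₁)ᶜ := fun x hx hx' => hx.2 hx'.2
      have s1 : r V (V ∪ (U ∩ T₁)) := hW V hVW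
      have e1 : V ∪ (U ∩ T₁) = U := by
        ext x; simp only [hV, Set.mem_union, Set.mem_diff, Set.mem_inter_iff]; tauto
      rw [e1] at s1
      have hVT2W : V ∪ T₂ ⊆ (U ∩ T₁)ᶜ := by
        intro x hx hx'
        rcases hx with hx | hx
        · exact hx.2 hx'.2
        · exact hdisj' x hx'.2 hx
      have s2 : r (V ∪ T₂) ((V ∪ T₂) ∪ (U ∩ T₁)) := hW _ hVT2W
      have e2 : (V ∪ T₂) ∪ (U ∩ T₁) = U ∪ T₂ := by
        ext x; simp only [hV, Set.mem_union, Set.mem_diff, Set.mem_inter_iff]; tauto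
      rw [e2] at s2
      have hV1 : V ⊆ T₁ᶜ := fun x hx => hx.2
      have hV12 : V ⊆ (T₁ ∪ T₂)ᶜ := by
        intro x hx hx'
        rcases hx' with hx' | hx'
        · exact hx.2 hx'
        · exact hU hx.1 hx'
      rw [hchar] at h12
      have s3 : r V (V ∪ (T₁ ∪ T₂)) := h12 V hV12
      have hVT21 : V ∪ T₂ ⊆ T₁ᶜ := by
        intro x hx hx'
        rcases hx with hx | hx
        · exact hx.2 hx'
        · exact hdisj' x hx' hx
      have s4 : r (V ∪ T₂) ((V ∪ T₂) ∪ T₁) := h1 _ hVT21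
      have e3 : (V ∪ T₂) ∪ T₁ = V ∪ (T₁ ∪ T₂) := by
        ext x; simp only [Set.mem_union]; tauto
      rw [e3] at s4
      -- r V (V∪T₂): s3 trans symm s4
      have s5 : r V (V ∪ T₂) := hr.trans s3 (hr.symm s4)
      exact hr.trans (hr.trans (hr.symm s1) s5) s2
    · -- D = T₁ \ U ∈ 𝒯
      rw [hchar] at hD h1 h12
      have hUD : U ⊆ (T₁ \ U)ᶜ := fun x hx hx' => hx'.2 hx
      have s1 : r U (U ∪ (T₁ \ U)) := hD U hUD
      have e1 : U ∪ (T₁ \ U) = U ∪ T₁ := by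
        ext x; simp only [Set.mem_union, Set.mem_diff]; tauto
      rw [e1] at s1
      have hV1 : U \ T₁ ⊆ T₁ᶜ := fun x hx => hx.2
      have hV12 : U \ T₁ ⊆ (T₁ ∪ T₂)ᶜ := by
        intro x hx hx'
        rcases hx' with hx' | hx'
        · exact hx.2 hx'
        · exact hU hx.1 hx'
      have s2 : r (U \ T₁) ((U \ T₁) ∪ T₁) := h1 _ hV1
      have s3 : r (U \ T₁) ((U \ T₁) ∪ (T₁ ∪ T₂)) := h12 _ hV12
      have e2 : (U \ T₁) ∪ T₁ = U ∪ T₁ := by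
        ext x; simp only [Set.mem_union, Set.mem_diff]; tauto
      have e3 : (U \ T₁) ∪ (T₁ ∪ T₂) = (U ∪ T₁) ∪ T₂ := by
        ext x; simp only [Set.mem_union, Set.mem_diff]; tauto
      rw [e2] at s2
      rw [e3] at s3
      have s4 : r (U ∪ T₁) ((U ∪ T₁) ∪ T₂) := hr.trans (hr.symm s2) s3
      have hU2D : U ∪ T₂ ⊆ (T₁ \ U)ᶜ := by
        intro x hx hx'
        rcases hx with hx | hx
        · exact hx'.2 hx
        · exact hdisj' x hx'.1 hx
      have s5 : r (U ∪ T₂) ((U ∪ T₂) ∪ (T₁ \ U)) := hD _ hU2D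
      have e4 : (U ∪ T₂) ∪ (T₁ \ U) = (U ∪ T₁) ∪ T₂ := by
        ext x; simp only [Set.mem_union, Set.mem_diff]; tauto
      rw [e4] at s5
      exact hr.trans (hr.trans s1 s4) (hr.symm s5)
  refine ⟨⟨hempty, hunion, ?_⟩, fun T₁ T₂ hi h1 h2 => hunion T₁ T₂ h1 h2 (hi ▸ hempty)⟩
  intro T₁ T₂ hdisj h1 h12 hprop
  rw [hchar]
  intro U hU
  apply hcase T₁ T₂ U hdisj h1 h12 hU
  by_cases hW : U ∩ T₁ = T₁
  · exact Or.inl (by rw [hW]; exact h1)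
  · have : U ∩ T₁ ⊂ T₁ := lt_of_le_of_ne Set.inter_subset_right hW
    rcases hprop _ this with hc | hc
    · exact Or.inl hc
    · right
      have : T₁ \ (U ∩ T₁) = T₁ \ U := by
        ext x; simp only [Set.mem_diff, Set.mem_inter_iff]; tauto
      exact this ▸ hc
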